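/- If F ∈ Q(q,t)[X_1,...,X_m] is a polynomial divisible by X_i, then for 1 ≤ i < m the polynomial T_i(F) is divisible by X_{i+1}, and for 1 < i ≤ m the polynomial T_{i-1}^{-1}(F) is divisible by X_{i-1}. -/

import Mathlib

set_option maxHeartbeats 1000000
set_option synthInstance.maxHeartbeats 400000

open MvPolynomial

/-- The field `ℚ(q,t)`, realized as the fraction field of `ℚ[q,t]`. -/
abbrev K2 := FractionRing (MvPolynomial (Fin 2) ℚ)

/-- The parameter `q ∈ ℚ(q,t)`. -/
noncomputable def qq : K2 := algebraMap (MvPolynomial (Fin 2) ℚ) K2 (X 0)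

/-- The parameter `t ∈ ℚ(q,t)`. -/
noncomputable def tt : K2 := algebraMap (MvPolynomial (Fin 2) ℚ) K2 (X 1)

/-- The polynomial ring `ℚ(q,t)[X₁,…,X_m]`. -/
abbrev Sqt (m : ℕ) := MvPolynomial (Fin m) K2

/-- The field `ℚ(q,t)(X₁,…,X_m)` in which the Laurent polynomial ring
`ℚ(q,t)[X₁^{±1},…,X_m^{±1}]` naturally embeds. -/
abbrev Lqt (m : ℕ) := FractionRing (Sqt m)

noncomputable def emb (m : ℕ) : Sqt m →+* Lqt m := algebraMap (Sqt m) (Lqt m)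

noncomputable def qL (m : ℕ) : Lqt m := emb m (C qq)

noncomputable def tL (m : ℕ) : Lqt m := emb m (C tt)

noncomputable def Xv (m : ℕ) (a : Fin m) : Lqt m := emb m (X a)

/-- The `ℤ`-indexed variables `X_j`, subject to the level-one convention
`X_{i+km} = q^{-k} X_i`; for `1 ≤ j ≤ m` this is the variable `X_j`. -/
noncomputable def Xz (m : ℕ) (hm : 0 < m) (j : ℤ) : Lqt m :=
  qL m ^ (-((j - 1) / (m : ℤ))) *
    Xv m ⟨((j - 1) % (m : ℤ)).toNat, by
      have h0 : (0 : ℤ) < (m : ℤ) := by exact_mod_cast hm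
      have h1 : 0 ≤ (j - 1) % (m : ℤ) := Int.emod_nonneg _ (ne_of_gt h0)
      have h2 : (j - 1) % (m : ℤ) < (m : ℤ) := Int.emod_lt_of_pos _ h0
      omega⟩

lemma swap_diff_dvd {R : Type*} [CommRing R] {σ : Type*} [DecidableEq σ]
    (i j : σ) (p : MvPolynomial σ R) :
    (X j - X i : MvPolynomial σ R) ∣ p - rename (Equiv.swap i j) p := by
  induction p using MvPolynomial.induction_on with
  | C a => simp
  | add p q hp hq =>
      rw [map_add]
      have : p + q - (rename (Equiv.swap i j) p + rename (Equiv.swap i j) q)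
          = (p - rename (Equiv.swap i j) p) + (q - rename (Equiv.swap i j) q) := by ring
      rw [this]; exact dvd_add hp hq
  | mul_X p k hp =>
      rw [map_mul, rename_X]
      rcases eq_or_ne k i with rfl | hki
      · rw [Equiv.swap_apply_left]
        have : p * X k - rename (Equiv.swap k j) p * X j
            = (p - rename (Equiv.swap k j) p) * X k
              - rename (Equiv.swap k j) p * (X j - X k) := by ring
        rw [this]
        exact dvd_sub (hp.mul_right _) (dvd_mul_left _ _)
      rcases eq_or_ne k j with rfl | hkj
      · rw [Equiv.swap_apply_right]
        have : p * X k - rename (Equiv.swap i k) p * X i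
            = (p - rename (Equiv.swap i k) p) * X k
              + rename (Equiv.swap i k) p * (X k - X i) := by ring
        rw [this]
        exact dvd_add (hp.mul_right _) (dvd_mul_left _ _)
      · rw [Equiv.swap_apply_of_ne_of_ne hki hkj]
        have : p * X k - rename (Equiv.swap i j) p * X k
            = (p - rename (Equiv.swap i j) p) * X k := by ring
        rw [this]
        exact hp.mul_right _


/-- if a polynomial `F ∈ ℚ(q,t)[X₁,…,X_m]` is divisible by `X_i`,
then `T_i(F)` is (a polynomial) divisible by `X_{i+1}`, and if it is divisible
by `X_{i+1}` then `T_i⁻¹(F)` is (a polynomial) divisible by `X_i`.  Here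
`(i, j)` encodes the adjacent pair `(i, i+1)`. -/
theorem stmt_5 (m : ℕ) (i j : Fin m) (hij : (j : ℕ) = (i : ℕ) + 1)
    (s : Lqt m ≃+* Lqt m)
    (hs : ∀ p : Sqt m, s (emb m p) = emb m (rename (Equiv.swap i j) p))
    (T Tinv : Lqt m → Lqt m)
    (hT : ∀ F : Lqt m, T F = tL m * s F +
      (tL m - 1) * (F - s F) / (1 - Xv m i * (Xv m j)⁻¹))
    (hTinv : ∀ F : Lqt m, Tinv F = s F +
      (1 - (tL m)⁻¹) * (Xv m i * (Xv m j)⁻¹ * F - s F) /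
        (1 - Xv m i * (Xv m j)⁻¹)) :
    (∀ p : Sqt m, X i ∣ p → ∃ p' : Sqt m, T (emb m p) = emb m p' ∧ X j ∣ p') ∧
    (∀ p : Sqt m, X j ∣ p → ∃ p' : Sqt m, Tinv (emb m p) = emb m p' ∧ X i ∣ p') := by
  have hne : i ≠ j := fun h => by simp [h] at hij
  have hinj : Function.Injective (emb m) := IsFractionRing.injective (Sqt m) (Lqt m)
  have hXne : (X j : Sqt m) ≠ X i := fun h => hne ((X_injective h).symm)
  have hXj : Xv m j ≠ 0 := by
    simp only [Xv, ne_eq, map_eq_zero_iff _ hinj]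
    exact X_ne_zero j
  have hXji : Xv m j - Xv m i ≠ 0 := by
    simp only [Xv, ne_eq, ← map_sub, map_eq_zero_iff _ hinj, sub_eq_zero]
    exact hXne
  have hd : 1 - Xv m i * (Xv m j)⁻¹ ≠ 0 := by
    have : 1 - Xv m i * (Xv m j)⁻¹ = (Xv m j - Xv m i) * (Xv m j)⁻¹ := by
      field_simp
    rw [this]
    exact mul_ne_zero hXji (inv_ne_zero hXj)
  have hXj' : emb m (X j) ≠ 0 := hXj
  have htt : tL m ≠ 0 := by
    simp only [tL, ne_eq, map_eq_zero_iff _ hinj, C_eq_zero]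
    simp only [tt, ne_eq, map_eq_zero_iff _ (IsFractionRing.injective (MvPolynomial (Fin 2) ℚ) K2)]
    exact X_ne_zero 1
  constructor
  · rintro p ⟨g, rfl⟩
    obtain ⟨h, hh⟩ := swap_diff_dvd i j (X i * g)
    refine ⟨X j * (C tt * rename (Equiv.swap i j) g + (C tt - 1) * h), ?_, ⟨_, rfl⟩⟩
    rw [hT, hs]
    have e1 : (rename (Equiv.swap i j)) (X i * g) = X j * rename (Equiv.swap i j) g := by
      rw [map_mul, rename_X, Equiv.swap_apply_left]
    rw [e1] at hh ⊢
    have hhL : emb m (X i) * emb m g - emb m (X j) * emb m (rename (Equiv.swap i j) g)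
        = (emb m (X j) - emb m (X i)) * emb m h := by
      rw [← map_mul, ← map_mul, ← map_sub, hh, map_mul, map_sub]
    have hq1 : (tL m - 1) * (emb m (X i * g) - emb m (X j * rename (Equiv.swap i j) g))
          / (1 - Xv m i * (Xv m j)⁻¹)
        = (tL m - 1) * (emb m (X j) * emb m h) := by
      rw [div_eq_iff hd]
      simp only [Xv, map_mul]
      linear_combination (tL m - 1) * hhL
        + (tL m - 1) * emb m h * emb m (X i) * mul_inv_cancel₀ hXj'
    rw [hq1]
    simp only [tL, Xv, map_mul, map_add, map_sub, map_one]
    ring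
  · rintro p ⟨g, rfl⟩
    obtain ⟨h, hh⟩ := swap_diff_dvd i j g
    refine ⟨X i * (rename (Equiv.swap i j) g + C (1 - tt⁻¹) * (X j * h)), ?_, ⟨_, rfl⟩⟩
    rw [hTinv, hs]
    have e1 : (rename (Equiv.swap i j)) (X j * g) = X i * rename (Equiv.swap i j) g := by
      rw [map_mul, rename_X, Equiv.swap_apply_right]
    rw [e1]
    have hhL : emb m g - emb m (rename (Equiv.swap i j) g)
        = (emb m (X j) - emb m (X i)) * emb m h := by
      rw [← map_sub, hh, map_mul, map_sub]
    have hCt : emb m (C (1 - tt⁻¹)) = 1 - (tL m)⁻¹ := by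
      have : (emb m).comp (C : K2 →+* Sqt m) (1 - tt⁻¹)
          = 1 - ((emb m).comp (C : K2 →+* Sqt m) tt)⁻¹ := by
        rw [map_sub, map_one, map_inv₀]
      simpa [tL] using this
    have hq2 : (1 - (tL m)⁻¹) * (Xv m i * (Xv m j)⁻¹ * emb m (X j * g)
          - emb m (X i * rename (Equiv.swap i j) g)) / (1 - Xv m i * (Xv m j)⁻¹)
        = (1 - (tL m)⁻¹) * (emb m (X i) * emb m (X j) * emb m h) := by
      rw [div_eq_iff hd]
      simp only [Xv, map_mul]
      linear_combination (1 - (tL m)⁻¹) * emb m (X i) * hhL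
        + ((1 - (tL m)⁻¹) * emb m (X i) * emb m g
          + (1 - (tL m)⁻¹) * emb m (X i) * emb m (X i) * emb m h) * mul_inv_cancel₀ hXj'
    rw [hq2]
    simp only [map_mul, map_add, hCt]
    ring
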